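/- Let 1 ≤ k < n, let M be a rank-s Cohen–Macaulay B_{k,n}-module, and let j ∈ {1,…,n}. Then the 1-increase inc_j(M) satisfies the defining relations of CM(B_{k+1,n+1}), i.e. it is a rank-s Cohen–Macaulay B_{k+1,n+1}-module, and the 1-co-increase inc^c_j(M) satisfies the defining relations of CM(B_{k,n+1}), i.e. it is a rank-s Cohen–Macaulay B_{k,n+1}-module. -/

import Mathlib

open scoped Classical

noncomputable section

namespace GCC

/-- The base ring `R = ℂ⟦t⟧` of formal power series. -/
abbrev Rser : Type := PowerSeries ℂ

/-- The power series variable `t`. -/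
noncomputable def tser : Rser := PowerSeries.X

/-- The cyclic product `X i * X (i-1) * ⋯ * X (i-(n-1))`, i.e.
`X_{i+n} · X_{i+n-1} · ⋯ · X_{i+1}` with indices read modulo `n`. -/
def cycProd {n s : ℕ} (X : ZMod n → Matrix (Fin s) (Fin s) Rser) (i : ZMod n) :
    Matrix (Fin s) (Fin s) Rser :=
  ((List.range n).map fun j => X (i - (j : ZMod n))).prod

/-- A (maximal) Cohen–Macaulay `B_{k,n}`-module of rank `s`: a family of `s × s`
matrices `X i`, `Y i` over `ℂ⟦t⟧`, indexed by `ℤ/n`, subject to the relations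
`X i * Y i = t·Id`, `Y i * X i = t·Id`, and the cyclic relation
`X_{i+n} ⋯ X_{i+1} = t^(n-k)·Id`. -/
structure CMMod (k n s : ℕ) : Type where
  X : ZMod n → Matrix (Fin s) (Fin s) Rser
  Y : ZMod n → Matrix (Fin s) (Fin s) Rser
  hXY : ∀ i, X i * Y i = tser • (1 : Matrix (Fin s) (Fin s) Rser)
  hYX : ∀ i, Y i * X i = tser • (1 : Matrix (Fin s) (Fin s) Rser)
  hcyc : ∀ i, cycProd X i = (tser ^ (n - k)) • (1 : Matrix (Fin s) (Fin s) Rser)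

/-- A morphism of Cohen–Macaulay `B_{k,n}`-modules: a family of matrices
`F i` with `F i * X i = X' i * F (i-1)` and `F (i-1) * Y i = Y' i * F i`. -/
structure CMHom {k n s s' : ℕ} (M : CMMod k n s) (M' : CMMod k n s') : Type where
  F : ZMod n → Matrix (Fin s') (Fin s) Rser
  hX : ∀ i, F i * M.X i = M'.X i * F (i - 1)
  hY : ∀ i, F (i - 1) * M.Y i = M'.Y i * F i

/-- `M` is indecomposable: its only idempotent endomorphisms are `0` and the identity. -/
def Indecomposable {k n s : ℕ} (M : CMMod k n s) : Prop :=
  ∀ f : CMHom M M, (∀ i, f.F i * f.F i = f.F i) → (∀ i, f.F i = 0) ∨ (∀ i, f.F i = 1)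

/-- A short exact sequence `0 → A → E → B → 0` in `CM(B_{k,n})`: a pair of
morphisms that is exact at each index `i` as a sequence of `R`-modules. -/
structure CMses {k n sA sE sB : ℕ} (A : CMMod k n sA) (E : CMMod k n sE)
    (B : CMMod k n sB) : Type where
  emb : CMHom A E
  quo : CMHom E B
  inj : ∀ i, Function.Injective ((emb.F i).mulVecLin)
  exactness : ∀ i, LinearMap.range ((emb.F i).mulVecLin) = LinearMap.ker ((quo.F i).mulVecLin)
  surj : ∀ i, Function.Surjective ((quo.F i).mulVecLin)

/-- A short exact sequence splits if some morphism `ρ : E → A` satisfies `ρ ∘ ι = id`. -/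
def CMses.Splits {k n sA sE sB : ℕ} {A : CMMod k n sA} {E : CMMod k n sE} {B : CMMod k n sB}
    (S : CMses A E B) : Prop :=
  ∃ ρ : CMHom E A, ∀ i, ρ.F i * S.emb.F i = 1

/-- `M` is rigid: every short exact sequence `0 → M → E → M → 0` splits. -/
def Rigid {k n s : ℕ} (M : CMMod k n s) : Prop :=
  ∀ (sE : ℕ) (E : CMMod k n sE) (S : CMses M E M), S.Splits

/-- `N` is the rank-1 module `L_I`: `X i = 1`, `Y i = t` for `i ∈ I`, and
`X i = t`, `Y i = 1` for `i ∉ I`. -/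
def IsRankOne {k n : ℕ} (I : Finset (ZMod n)) (N : CMMod k n 1) : Prop :=
  (∀ i, N.X i = if i ∈ I then 1 else tser • 1) ∧
  (∀ i, N.Y i = if i ∈ I then tser • 1 else 1)

/-- `M` admits the filtration `L_{I₁} | L_{I₂} | ⋯ | L_{Iₘ}`: there are modules
`M = N₁, N₂, …, Nₘ = L_{Iₘ}` and short exact sequences
`0 → N_{j+1} → N_j → L_{I_j} → 0`. -/
inductive HasFiltration {k n : ℕ} : {s : ℕ} → CMMod k n s → List (Finset (ZMod n)) → Prop
  | base {I : Finset (ZMod n)} {N : CMMod k n 1} : IsRankOne I N → HasFiltration N [I]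
  | step {s s' : ℕ} {N : CMMod k n s} {M : CMMod k n s'} {Q : CMMod k n 1}
      {I : Finset (ZMod n)} {rest : List (Finset (ZMod n))} :
      IsRankOne I Q → HasFiltration N rest → Nonempty (CMses N M Q) →
      HasFiltration M (I :: rest)


/-- The label in `{1,…,n}` of a residue in `ℤ/n`. -/
def labelOfZ (n : ℕ) (z : ZMod n) : ℕ := if z.val = 0 then n else z.val

/-- Insert an extra matrix `A` after position `j` of the cyclic family `X`:
the new family, indexed by `ℤ/(n+1)`, is `(X_1, …, X_j, A, X_{j+1}, …, X_n)`. -/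
def incData {n s : ℕ} (j : ℕ) (X : ZMod n → Matrix (Fin s) (Fin s) Rser)
    (A : Matrix (Fin s) (Fin s) Rser) : ZMod (n + 1) → Matrix (Fin s) (Fin s) Rser :=
  fun i' =>
    if labelOfZ (n + 1) i' ≤ j then X ((labelOfZ (n + 1) i' : ℕ) : ZMod n)
    else if labelOfZ (n + 1) i' = j + 1 then A
    else X (((labelOfZ (n + 1) i' - 1 : ℕ) : ZMod n))

/-- `M'` is the 1-increase `inc_j(M)`: the X-sequence is
`(X_1,…,X_j, Id, X_{j+1},…,X_n)` and the Y-sequence is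
`(Y_1,…,Y_j, t·Id, Y_{j+1},…,Y_n)`. -/
def IsInc {k n s : ℕ} (j : ℕ) (M : CMMod k n s) (M' : CMMod (k + 1) (n + 1) s) : Prop :=
  M'.X = incData j M.X 1 ∧ M'.Y = incData j M.Y (tser • 1)

/-- `M'` is the 1-co-increase `incᶜ_j(M)`: insert `X = t·Id`, `Y = Id` after position `j`. -/
def IsCoInc {k n s : ℕ} (j : ℕ) (M : CMMod k n s) (M' : CMMod k (n + 1) s) : Prop :=
  M'.X = incData j M.X (tser • 1) ∧ M'.Y = incData j M.Y 1


/-! ### Auxiliary lemmas for `inc_is_CM` -/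

lemma tser_ne_zero : tser ≠ 0 := PowerSeries.X_ne_zero

/-- A normal form for `cycProd` avoiding the list-monad coercion. -/
lemma cycProd_eq {n s : ℕ} (X : ZMod n → Matrix (Fin s) (Fin s) Rser) (i : ZMod n) :
    cycProd X i = ((List.range n).map fun (l : ℕ) => X (i - ((l : ℕ) : ZMod n))).prod := by
  rw [cycProd]
  simp only [bind_pure_comp, List.map_eq_map, List.map_map]
  rfl

/-- Right cancellation by a matrix admitting a quasi-inverse. -/
lemma mat_cancel {s : ℕ} {A B Z W : Matrix (Fin s) (Fin s) Rser}
    (hZW : Z * W = tser • 1) (h : A * Z = B * Z) : A = B := by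
  have h2 : A * Z * W = B * Z * W := by rw [h]
  rw [mul_assoc, mul_assoc, hZW, Matrix.mul_smul, Matrix.mul_smul, mul_one, mul_one] at h2
  refine Matrix.ext fun a b => ?_
  have h4 : (tser • A) a b = (tser • B) a b := by rw [h2]
  simp only [Matrix.smul_apply, smul_eq_mul] at h4
  exact mul_left_cancel₀ tser_ne_zero h4

lemma cycProd_rotate {m s : ℕ} (X : ZMod (m+1) → Matrix (Fin s) (Fin s) Rser)
    (w : ZMod (m+1)) :
    cycProd X (w + 1) * X (w + 1) = X (w + 1) * cycProd X w := by
  have head : ∀ v : ZMod (m+1), cycProd X v =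
      X v * ((List.range m).map fun (l : ℕ) => X ((v - 1) - ((l : ℕ) : ZMod (m+1)))).prod := by
    intro v
    have hmap : (List.range m).map ((fun (l : ℕ) => X (v - ((l : ℕ) : ZMod (m+1)))) ∘ Nat.succ)
        = (List.range m).map fun (l : ℕ) => X ((v - 1) - ((l : ℕ) : ZMod (m+1))) :=
      List.map_congr_left fun l _ => by
        simp only [Function.comp_apply, Nat.succ_eq_add_one]
        congr 1
        push_cast
        ring
    rw [cycProd_eq, List.range_succ_eq_map, List.map_cons, List.prod_cons, List.map_map, hmap,
      Nat.cast_zero, sub_zero]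
  have tail : ∀ v : ZMod (m+1), cycProd X v =
      ((List.range m).map fun (l : ℕ) => X (v - ((l : ℕ) : ZMod (m+1)))).prod * X (v + 1) := by
    intro v
    have hm : v - ((m : ℕ) : ZMod (m+1)) = v + 1 := by
      have h1 := ZMod.natCast_self (m+1)
      push_cast at h1
      linear_combination -h1
    rw [cycProd_eq, List.range_succ, List.map_append, List.prod_append, List.map_singleton,
      List.prod_singleton, hm]
  rw [head (w+1), tail w, add_sub_cancel_right, mul_assoc]

/-- If the cyclic product is scalar at one index, it is that scalar at every index. -/
lemma cycProd_const {m s : ℕ} (X Y : ZMod (m+1) → Matrix (Fin s) (Fin s) Rser)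
    (hXY : ∀ i, X i * Y i = tser • 1) (c : Rser)
    (h0 : cycProd X 0 = c • 1) (i : ZMod (m+1)) : cycProd X i = c • 1 := by
  have key : ∀ r : ℕ, cycProd X ((r : ℕ) : ZMod (m+1)) = c • 1 := by
    intro r
    induction r with
    | zero => simpa using h0
    | succ r ih =>
      have hstep := cycProd_rotate X ((r : ℕ) : ZMod (m+1))
      rw [ih] at hstep
      have h2 : cycProd X (((r : ℕ) : ZMod (m+1)) + 1) * X (((r : ℕ) : ZMod (m+1)) + 1)
          = (c • 1) * X (((r : ℕ) : ZMod (m+1)) + 1) := by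
        rw [hstep, Matrix.mul_smul, Matrix.smul_mul, mul_one, one_mul]
      have h3 := mat_cancel (hXY _) h2
      have hc : (((r + 1 : ℕ)) : ZMod (m+1)) = ((r : ℕ) : ZMod (m+1)) + 1 := by push_cast; ring
      rw [hc]
      exact h3
  have hi : ((i.val : ℕ) : ZMod (m+1)) = i := by rw [ZMod.natCast_val, ZMod.cast_id]
  rw [← hi]
  exact key i.val

lemma labelOfZ_neg_nat {n : ℕ} (l : ℕ) (hl : l ≤ n) :
    labelOfZ (n+1) ((0 : ZMod (n+1)) - ((l : ℕ) : ZMod (n+1))) = n + 1 - l := by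
  rcases Nat.eq_zero_or_pos l with rfl | hl1
  · simp [labelOfZ]
  · have hv : ((l : ℕ) : ZMod (n+1)).val = l := ZMod.val_cast_of_lt (by omega)
    have hne : ((l : ℕ) : ZMod (n+1)) ≠ 0 := by
      intro h
      rw [h, ZMod.val_zero] at hv
      omega
    rw [zero_sub, labelOfZ, ZMod.neg_val, if_neg hne, hv, if_neg (by omega)]

/-- The key computation: the cyclic product of the increased module at `0`. -/
lemma cycProd_incData {n s : ℕ} (j : ℕ) (hj : 1 ≤ j) (hj' : j ≤ n)
    (X : ZMod n → Matrix (Fin s) (Fin s) Rser) (c : Rser) :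
    cycProd (incData j X (c • 1)) 0 = c • cycProd X 0 := by
  set a : ℕ := n - j with ha
  -- value of the increased family at the successive indices `0 - l`
  have hg1 : ∀ l : ℕ, l < a →
      incData j X (c • 1) ((0 : ZMod (n+1)) - ((l : ℕ) : ZMod (n+1)))
        = X ((0 : ZMod n) - ((l : ℕ) : ZMod n)) := by
    intro l hl
    simp only [incData]
    rw [labelOfZ_neg_nat l (by omega), if_neg (by omega), if_neg (by omega)]
    congr 1
    have e1 : n + 1 - l - 1 = n - l := by omega
    have e2 : ((n - l : ℕ) : ZMod n) = ((n : ℕ) : ZMod n) - ((l : ℕ) : ZMod n) := by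
      rw [Nat.cast_sub (by omega : l ≤ n)]
    rw [e1, e2, ZMod.natCast_self]
  have hg2 : incData j X (c • 1) ((0 : ZMod (n+1)) - ((a : ℕ) : ZMod (n+1))) = c • 1 := by
    simp only [incData]
    rw [labelOfZ_neg_nat a (by omega), if_neg (by omega), if_pos (by omega)]
  have hg3 : ∀ l : ℕ, l < j →
      incData j X (c • 1) ((0 : ZMod (n+1)) - (((a + 1 + l : ℕ)) : ZMod (n+1)))
        = X ((0 : ZMod n) - (((a + l : ℕ)) : ZMod n)) := by
    intro l hl
    simp only [incData]
    rw [labelOfZ_neg_nat (a + 1 + l) (by omega), if_pos (by omega)]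
    congr 1
    have e1 : n + 1 - (a + 1 + l) = j - l := by omega
    have e2 : ((j - l : ℕ) : ZMod n) = ((j : ℕ) : ZMod n) - ((l : ℕ) : ZMod n) := by
      rw [Nat.cast_sub hl.le]
    have e3 : (((a + l : ℕ)) : ZMod n) = ((n : ℕ) : ZMod n) - ((j : ℕ) : ZMod n)
        + ((l : ℕ) : ZMod n) := by
      push_cast [ha, Nat.cast_sub hj']
      ring
    rw [e1, e2, e3, ZMod.natCast_self]
    ring
  -- decompose the index list
  have hsplit : List.range (n+1)
      = (List.range a) ++ (a :: ((List.range j).map fun l => a + 1 + l)) := by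
    have h2 : List.range' 0 a ++ List.range' (0 + 1 * a) (j+1) 1 = List.range' 0 ((j+1) + a) :=
      (List.range'_append (s := 0) (m := a) (n := j+1) (step := 1)).trans (by rw [Nat.add_comm])
    rw [show (0 : ℕ) + 1 * a = a by omega] at h2
    rw [List.range_eq_range' (n := n+1), show n + 1 = (j+1) + a by omega, ← h2,
      ← List.range_eq_range', List.range'_succ]
    congr 2
    exact List.range'_eq_map_range (s := a+1) (n := j)
  have hsplit' : List.range n = (List.range a) ++ ((List.range j).map fun l => a + l) := by
    have h2 : List.range' 0 a ++ List.range' (0 + 1 * a) j 1 = List.range' 0 (j + a) :=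
      (List.range'_append (s := 0) (m := a) (n := j) (step := 1)).trans (by rw [Nat.add_comm])
    rw [show (0 : ℕ) + 1 * a = a by omega] at h2
    rw [List.range_eq_range' (n := n), show n = j + a by omega, ← h2, ← List.range_eq_range']
    congr 1
    exact List.range'_eq_map_range (s := a) (n := j)
  have eA : (List.range a).map
        (fun l : ℕ => incData j X (c • 1) ((0 : ZMod (n+1)) - ((l : ℕ) : ZMod (n+1))))
      = (List.range a).map (fun l : ℕ => X ((0 : ZMod n) - ((l : ℕ) : ZMod n))) :=
    List.map_congr_left fun l hl => hg1 l (List.mem_range.mp hl)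
  have eB : (List.range j).map
        (fun l : ℕ => incData j X (c • 1) ((0 : ZMod (n+1)) - (((a + 1 + l : ℕ)) : ZMod (n+1))))
      = (List.range j).map (fun l : ℕ => X ((0 : ZMod n) - (((a + l : ℕ)) : ZMod n))) :=
    List.map_congr_left fun l hl => hg3 l (List.mem_range.mp hl)
  rw [cycProd_eq, cycProd_eq, hsplit, hsplit']
  simp only [List.map_append, List.map_cons, List.map_map, List.prod_append, List.prod_cons,
    Function.comp_def]
  rw [eA, eB, hg2]
  rw [Matrix.smul_mul, one_mul, Matrix.mul_smul]

/-- The 1-increase of a Cohen–Macaulay `B_{k,n}`-module satisfies the defining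
relations of `CM(B_{k+1,n+1})`, and the 1-co-increase satisfies the defining
relations of `CM(B_{k,n+1})`. -/
theorem inc_is_CM (k n : ℕ) (hk : 1 ≤ k) (hkn : k < n) (s : ℕ) (M : CMMod k n s)
    (j : ℕ) (hj : 1 ≤ j) (hj' : j ≤ n) :
    (∃ M' : CMMod (k + 1) (n + 1) s, IsInc j M M') ∧
    (∃ M'' : CMMod k (n + 1) s, IsCoInc j M M'') := by
  constructor
  · -- the 1-increase
    have hXY : ∀ i, incData j M.X 1 i * incData j M.Y (tser • 1) i
        = tser • (1 : Matrix (Fin s) (Fin s) Rser) := by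
      intro i
      simp only [incData]
      split_ifs with h1 h2
      · exact M.hXY _
      · rw [one_mul]
      · exact M.hXY _
    have hYX : ∀ i, incData j M.Y (tser • 1) i * incData j M.X 1 i
        = tser • (1 : Matrix (Fin s) (Fin s) Rser) := by
      intro i
      simp only [incData]
      split_ifs with h1 h2
      · exact M.hYX _
      · rw [mul_one]
      · exact M.hYX _
    have h0 : cycProd (incData j M.X 1) 0
        = (tser ^ (n + 1 - (k + 1))) • (1 : Matrix (Fin s) (Fin s) Rser) := by
      have h1 := cycProd_incData j hj hj' M.X 1
      rw [one_smul, one_smul] at h1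
      rw [show n + 1 - (k + 1) = n - k by omega, h1, M.hcyc 0]
    exact ⟨⟨incData j M.X 1, incData j M.Y (tser • 1), hXY, hYX,
      cycProd_const _ _ hXY _ h0⟩, rfl, rfl⟩
  · -- the 1-co-increase
    have hXY : ∀ i, incData j M.X (tser • 1) i * incData j M.Y 1 i
        = tser • (1 : Matrix (Fin s) (Fin s) Rser) := by
      intro i
      simp only [incData]
      split_ifs with h1 h2
      · exact M.hXY _
      · rw [mul_one]
      · exact M.hXY _
    have hYX : ∀ i, incData j M.Y 1 i * incData j M.X (tser • 1) i
        = tser • (1 : Matrix (Fin s) (Fin s) Rser) := by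
      intro i
      simp only [incData]
      split_ifs with h1 h2
      · exact M.hYX _
      · rw [one_mul]
      · exact M.hYX _
    have h0 : cycProd (incData j M.X (tser • 1)) 0
        = (tser ^ (n + 1 - k)) • (1 : Matrix (Fin s) (Fin s) Rser) := by
      rw [cycProd_incData j hj hj' M.X tser, M.hcyc 0, smul_smul, ← pow_succ',
        show n - k + 1 = n + 1 - k by omega]
    exact ⟨⟨incData j M.X (tser • 1), incData j M.Y 1, hXY, hYX,
      cycProd_const _ _ hXY _ h0⟩, rfl, rfl⟩

end GCC
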